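/- arXiv:1810.11884 — 2 statements merged into one kernel-verified Lean document; each statement's English description precedes it below -/
import Mathlib

section
/- Let E ⊂ ℝ be measurable, let s⁻ < s be real numbers such that the indicator function χ_E is almost everywhere constant on the interval (s⁻, s), and let ρ > 0. Then ∫_{s⁻}^{s} |χ_E(u + ρ) - χ_E(u)| du ≤ min(ρ, s - s⁻). -/
open MeasureTheory Set

/-- If `χ_E` is a.e. constant on `(s⁻, s)` (as holds between two consecutive
boundary points of a set of locally finite perimeter in `ℝ`), then for `ρ > 0`
one has `∫_{s⁻}^{s} |χ_E(u+ρ) - χ_E(u)| du ≤ min(ρ, s - s⁻)`. -/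
theorem stmt_1 (E : Set ℝ) (hE : MeasurableSet E) (sm s ρ : ℝ)
    (hlt : sm < s) (hρ : 0 < ρ)
    (hconst : ∃ v : ℝ, ∀ᵐ u : ℝ, u ∈ Set.Ioo sm s → E.indicator (fun _ => (1 : ℝ)) u = v) :
    ∫ u in sm..s, |E.indicator (fun _ => (1 : ℝ)) (u + ρ) - E.indicator (fun _ => (1 : ℝ)) u|
      ≤ min ρ (s - sm) := by
  set χ : ℝ → ℝ := E.indicator (fun _ => (1 : ℝ)) with hχdef
  have hχmeas : Measurable χ := measurable_const.indicator hE
  have hbound : ∀ a b : ℝ, |χ a - χ b| ≤ 1 := by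
    intro a b
    by_cases ha : a ∈ E <;> by_cases hb : b ∈ E <;>
      simp [hχdef, Set.indicator_of_mem, Set.indicator_of_notMem, ha, hb]
  have hfmeas : Measurable fun u => |χ (u + ρ) - χ u| :=
    ((hχmeas.comp (measurable_add_const ρ)).sub hχmeas).abs
  have hint : ∀ a b : ℝ, IntervalIntegrable (fun u => |χ (u + ρ) - χ u|) volume a b := by
    intro a b
    rw [intervalIntegrable_iff]
    refine Integrable.mono' (g := fun _ => (1 : ℝ))
      (integrableOn_const measure_Ioc_lt_top.ne)
      hfmeas.aestronglyMeasurable.restrict ?_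
    filter_upwards with u
    rw [Real.norm_eq_abs, abs_abs]
    exact hbound _ _
  have h1 : ∫ u in sm..s, |χ (u + ρ) - χ u| ≤ s - sm := by
    calc ∫ u in sm..s, |χ (u + ρ) - χ u| ≤ ∫ _u in sm..s, (1 : ℝ) :=
          intervalIntegral.integral_mono_on hlt.le (hint sm s) intervalIntegrable_const
            (fun u _ => hbound _ _)
      _ = s - sm := by simp
  rcases le_or_gt (s - sm) ρ with hcase | hcase
  · exact le_min (h1.trans hcase) h1
  · obtain ⟨v, hv⟩ := hconst
    have hv2 : ∀ᵐ u : ℝ, u + ρ ∈ Ioo sm s → χ (u + ρ) = v :=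
      (measurePreserving_add_right volume ρ).quasiMeasurePreserving.ae hv
    have hne : ∀ᵐ u : ℝ, u ≠ s - ρ := by
      rw [ae_iff]
      simp
    have hz : ∫ u in sm..(s - ρ), |χ (u + ρ) - χ u| = 0 := by
      apply intervalIntegral.integral_zero_ae
      filter_upwards [hv, hv2, hne] with u h1' h2' h3' hu
      rw [uIoc_of_le (by linarith)] at hu
      have hu1 : u ∈ Ioo sm s := ⟨hu.1, by linarith [hu.2]⟩
      have hu2 : u + ρ ∈ Ioo sm s :=
        ⟨by linarith [hu.1], by have := lt_of_le_of_ne hu.2 h3'; linarith⟩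
      rw [h2' hu2, h1' hu1, sub_self, abs_zero]
    have hsplit := intervalIntegral.integral_add_adjacent_intervals
      (hint sm (s - ρ)) (hint (s - ρ) s)
    have h2 : ∫ u in sm..s, |χ (u + ρ) - χ u| ≤ ρ := by
      rw [← hsplit, hz, zero_add]
      calc ∫ u in (s - ρ)..s, |χ (u + ρ) - χ u| ≤ ∫ _u in (s - ρ)..s, (1 : ℝ) :=
            intervalIntegral.integral_mono_on (by linarith) (hint _ _) intervalIntegrable_const
              (fun u _ => hbound _ _)
        _ = ρ := by simp
    exact le_min h2 h1
end

section
/- Let K̂ : ℝ → [0,∞) be integrable with ∫_ℝ |ρ| K̂(ρ) dρ < ∞, let L > 0, and let E ⊂ ℝ be an L-periodic set of locally finite perimeter. Then ∫_0^L ∫_ℝ |χ_E(u + ρ) − χ_E(u)| K̂(ρ) dρ du ≤ Per(E, [0,L)) · ∫_ℝ |ρ| K̂(ρ) dρ, where Per(E, [0,L)) = #(∂E ∩ [0,L)) is the number of boundary points of E in one period. -/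
open MeasureTheory Set
open scoped ENNReal

lemma frontier_mem_of_ne {E : Set ℝ} {u v : ℝ}
    (h : ¬ ((u ∈ E) ↔ (v ∈ E))) :
    ∃ b ∈ frontier E, b ∈ uIcc u v := by
  by_contra hc
  push_neg at hc
  have hsub : uIcc u v ⊆ interior E ∪ interior Eᶜ := by
    intro x hx
    have hx' : x ∉ frontier E := fun h' => hc x h' hx
    by_cases hcl : x ∈ closure E
    · left
      by_contra hint
      exact hx' ⟨hcl, hint⟩
    · right
      rw [interior_compl]
      exact hcl
  have hdisj : Disjoint (interior E) (interior Eᶜ) :=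
    (disjoint_compl_right (a := E)).mono interior_subset interior_subset
  rcases isPreconnected_uIcc.subset_or_subset isOpen_interior isOpen_interior hdisj hsub with
    hs | hs
  · have h1 : u ∈ E := interior_subset (hs left_mem_uIcc)
    have h2 : v ∈ E := interior_subset (hs right_mem_uIcc)
    exact h (by tauto)
  · have h1 : u ∉ E := interior_subset (hs left_mem_uIcc)
    have h2 : v ∉ E := interior_subset (hs right_mem_uIcc)
    exact h (by tauto)

lemma frontier_per {E : Set ℝ} {L : ℝ} (hper : ∀ x : ℝ, x + L ∈ E ↔ x ∈ E) (x : ℝ) :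
    x + L ∈ frontier E ↔ x ∈ frontier E := by
  have h : (Homeomorph.addRight L) ⁻¹' E = E := by
    ext y; exact hper y
  have h2 := (Homeomorph.addRight L).preimage_frontier E
  rw [h] at h2
  constructor
  · intro hx
    rw [← h2]
    exact hx
  · intro hx
    rw [← h2] at hx
    exact hx

lemma frontier_per_z {E : Set ℝ} {L : ℝ} (hper : ∀ x : ℝ, x + L ∈ E ↔ x ∈ E) (k : ℤ) (x : ℝ) :
    x + (k : ℝ) * L ∈ frontier E ↔ x ∈ frontier E := by
  induction k using Int.induction_on with
  | zero => simp
  | succ n ih =>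
      have := frontier_per hper (x + (n : ℝ) * L)
      push_cast at this ⊢
      rw [show x + ((n : ℝ) + 1) * L = x + (n : ℝ) * L + L by ring, this]
      exact ih
  | pred n ih =>
      have := frontier_per hper (x + (-(n : ℝ) - 1) * L)
      push_cast at this ⊢
      rw [show x + (-(n : ℝ) - 1) * L + L = x + (-(n : ℝ)) * L by ring] at this
      push_cast at ih
      exact this.symm.trans ih

lemma core_bound {E : Set ℝ} {L : ℝ} (hL : 0 < L)
    (hper : ∀ x : ℝ, x + L ∈ E ↔ x ∈ E)
    (hfin : (frontier E ∩ Set.Ico 0 L).Finite) (ρ : ℝ) :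
    volume ({u : ℝ | ¬ ((u + ρ ∈ E) ↔ (u ∈ E))} ∩ Ico 0 L)
      ≤ (hfin.toFinset.card : ℝ≥0∞) * ENNReal.ofReal |ρ| := by
  set m : ℕ := ⌈|ρ| / L⌉₊ + 1 with hm
  set Fs := hfin.toFinset with hFs
  set Ks := Finset.Icc (-(m : ℤ)) (m : ℤ) with hKs
  have hmL : |ρ| ≤ ((m : ℝ) - 1) * L := by
    have h1 : |ρ| / L ≤ (⌈|ρ| / L⌉₊ : ℝ) := Nat.le_ceil _
    have : (m : ℝ) - 1 = (⌈|ρ| / L⌉₊ : ℝ) := by rw [hm]; push_cast; ring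
    rw [this]
    rw [div_le_iff₀ hL] at h1
    linarith [h1]
  -- covering
  have hcover : {u : ℝ | ¬ ((u + ρ ∈ E) ↔ (u ∈ E))} ∩ Ico 0 L ⊆
      ⋃ b ∈ Fs, ⋃ k ∈ Ks, (uIcc (b + (k : ℝ) * L - ρ) (b + (k : ℝ) * L) ∩ Ico 0 L) := by
    rintro u ⟨hu, huI⟩
    obtain ⟨hu0, huL⟩ := huI
    obtain ⟨b, hbF, hbI⟩ := frontier_mem_of_ne (E := E) (u := u) (v := u + ρ) (by
      simp only [mem_setOf_eq] at hu; tauto)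
    set k : ℤ := toIcoDiv hL 0 b with hk
    set b₀ : ℝ := b - (k : ℝ) * L with hb₀
    have hmod : b₀ ∈ Ico (0 : ℝ) L := by
      have h1 := toIcoMod_mem_Ico' hL b
      have h2 : toIcoMod hL 0 b = b - (k : ℝ) * L := by
        rw [← self_sub_toIcoDiv_zsmul hL 0 b, zsmul_eq_mul, hk]
      rwa [h2] at h1
    have hbb : b₀ + (k : ℝ) * L = b := by rw [hb₀]; ring
    have hb₀F : b₀ ∈ frontier E := by
      rw [← frontier_per_z hper k b₀, hbb]; exact hbF
    have hb₀Fs : b₀ ∈ Fs := by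
      rw [hFs, Set.Finite.mem_toFinset]; exact ⟨hb₀F, hmod⟩
    -- bounds on b
    have hbI' := Set.mem_uIcc.mp hbI
    have hb_lb : u - |ρ| ≤ b := by
      rcases hbI' with ⟨h1, h2⟩ | ⟨h1, h2⟩
      · linarith [abs_nonneg ρ]
      · linarith [neg_abs_le ρ]
    have hb_ub : b ≤ u + |ρ| := by
      rcases hbI' with ⟨h1, h2⟩ | ⟨h1, h2⟩
      · linarith [le_abs_self ρ]
      · linarith [abs_nonneg ρ]
    -- bounds on k
    have hkL1 : (k : ℝ) * L ≤ b := by linarith [hmod.1]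
    have hkL2 : b < (k : ℝ) * L + L := by linarith [hmod.2]
    have hkmem : k ∈ Ks := by
      rw [hKs, Finset.mem_Icc]
      constructor
      · have : -((m : ℝ)) * L < (k : ℝ) * L := by nlinarith
        have : -((m : ℝ)) < (k : ℝ) := lt_of_mul_lt_mul_right this hL.le
        have : -(m : ℤ) < k := by exact_mod_cast this
        omega
      · have : (k : ℝ) * L ≤ (m : ℝ) * L := by nlinarith
        have : (k : ℝ) ≤ (m : ℝ) := le_of_mul_le_mul_right this hL
        exact_mod_cast this
    -- membership of u
    have humem : u ∈ uIcc (b₀ + (k : ℝ) * L - ρ) (b₀ + (k : ℝ) * L) := by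
      rw [hbb, Set.mem_uIcc]
      rcases hbI' with ⟨h1, h2⟩ | ⟨h1, h2⟩
      · left; constructor <;> linarith
      · right; constructor <;> linarith
    exact Set.mem_biUnion hb₀Fs (Set.mem_biUnion hkmem ⟨humem, hu0, huL⟩)
  refine le_trans (measure_mono hcover) ?_
  refine le_trans (measure_biUnion_finset_le _ _) ?_
  have hinner : ∀ b ∈ Fs,
      volume (⋃ k ∈ Ks, (uIcc (b + (k : ℝ) * L - ρ) (b + (k : ℝ) * L) ∩ Ico 0 L))
        ≤ ENNReal.ofReal |ρ| := by
    intro b _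
    set U : ℤ → Set ℝ := fun k =>
      uIcc (b - ρ) b ∩ Ico (-(k : ℝ) * L) (L - (k : ℝ) * L) with hU
    have hTU : ∀ k : ℤ,
        (uIcc (b + (k : ℝ) * L - ρ) (b + (k : ℝ) * L) ∩ Ico 0 L)
          = (fun v : ℝ => v + (-((k : ℝ) * L))) ⁻¹' U k := by
      intro k
      ext v
      simp only [hU, Set.mem_preimage, Set.mem_inter_iff, Set.mem_uIcc, Set.mem_Ico]
      constructor
      · rintro ⟨h1 | h1, h2, h3⟩
        · exact ⟨Or.inl ⟨by linarith [h1.1], by linarith [h1.2]⟩, by linarith, by linarith⟩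
        · exact ⟨Or.inr ⟨by linarith [h1.1], by linarith [h1.2]⟩, by linarith, by linarith⟩
      · rintro ⟨h1 | h1, h2, h3⟩
        · exact ⟨Or.inl ⟨by linarith [h1.1], by linarith [h1.2]⟩, by linarith, by linarith⟩
        · exact ⟨Or.inr ⟨by linarith [h1.1], by linarith [h1.2]⟩, by linarith, by linarith⟩
    have hvol : ∀ k : ℤ,
        volume (uIcc (b + (k : ℝ) * L - ρ) (b + (k : ℝ) * L) ∩ Ico 0 L) = volume (U k) := by
      intro k
      rw [hTU k]
      exact measure_preimage_add_right volume _ _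
    have hdisj : (Ks : Set ℤ).PairwiseDisjoint U := by
      intro k _ k' _ hkk
      refine Set.disjoint_left.mpr ?_
      rintro v ⟨_, h1, h2⟩ ⟨_, h3, h4⟩
      apply hkk
      have e1 : ((k' : ℝ) - k) * L < L := by linarith
      have e2 : ((k : ℝ) - k') * L < L := by linarith
      have e3 : (k' : ℝ) - k < 1 := by
        by_contra hcon
        push_neg at hcon
        nlinarith
      have e4 : (k : ℝ) - k' < 1 := by
        by_contra hcon
        push_neg at hcon
        nlinarith
      have e5 : k' < k + 1 := by exact_mod_cast (show (k' : ℝ) < (k : ℝ) + 1 by linarith)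
      have e6 : k < k' + 1 := by exact_mod_cast (show (k : ℝ) < (k' : ℝ) + 1 by linarith)
      omega
    have hmeas : ∀ k ∈ Ks, MeasurableSet (U k) := fun k _ =>
      measurableSet_uIcc.inter measurableSet_Ico
    calc volume (⋃ k ∈ Ks, (uIcc (b + (k : ℝ) * L - ρ) (b + (k : ℝ) * L) ∩ Ico 0 L))
        ≤ ∑ k ∈ Ks, volume (uIcc (b + (k : ℝ) * L - ρ) (b + (k : ℝ) * L) ∩ Ico 0 L) :=
          measure_biUnion_finset_le _ _
      _ = ∑ k ∈ Ks, volume (U k) := Finset.sum_congr rfl (fun k _ => hvol k)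
      _ = volume (⋃ k ∈ Ks, U k) := (measure_biUnion_finset hdisj hmeas).symm
      _ ≤ volume (uIcc (b - ρ) b) :=
          measure_mono (Set.iUnion₂_subset fun k _ => Set.inter_subset_left)
      _ = ENNReal.ofReal |ρ| := by
          rw [Real.volume_interval]
          congr 1
          simp
  refine le_trans (Finset.sum_le_sum hinner) ?_
  rw [Finset.sum_const, nsmul_eq_mul]

/-- For an `L`-periodic set `E ⊂ ℝ` of locally finite perimeter (finitely many
boundary points per period) and a nonnegative integrable kernel `K̂` with finite
first moment,
`∫_0^L ∫_ℝ |χ_E(u+ρ) − χ_E(u)| K̂(ρ) dρ du ≤ #(∂E ∩ [0,L)) · ∫_ℝ |ρ| K̂(ρ) dρ`. -/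
theorem stmt_12 (Khat : ℝ → ℝ) (hK0 : ∀ ρ : ℝ, 0 ≤ Khat ρ)
    (hKint : Integrable Khat) (hKmom : Integrable (fun ρ => |ρ| * Khat ρ))
    (L : ℝ) (hL : 0 < L) (E : Set ℝ) (hE : MeasurableSet E)
    (hper : ∀ x : ℝ, x + L ∈ E ↔ x ∈ E)
    (hfin : (frontier E ∩ Set.Ico 0 L).Finite) :
    ∫ u in Set.Ico (0:ℝ) L, ∫ ρ : ℝ,
        |E.indicator (fun _ => (1:ℝ)) (u + ρ) - E.indicator (fun _ => (1:ℝ)) u| * Khat ρ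
      ≤ ((frontier E ∩ Set.Ico 0 L).ncard : ℝ) * ∫ ρ : ℝ, |ρ| * Khat ρ := by
  classical
  set χ : ℝ → ℝ := E.indicator (fun _ => (1:ℝ)) with hχ
  have hχm : Measurable χ := measurable_const.indicator hE
  set N : ℝ := ((frontier E ∩ Set.Ico 0 L).ncard : ℝ) with hN
  have hNcard : (frontier E ∩ Set.Ico 0 L).ncard = hfin.toFinset.card :=
    Set.ncard_eq_toFinset_card _ hfin
  set μ : Measure ℝ := volume.restrict (Set.Ico (0:ℝ) L) with hμ
  haveI hfinμ : IsFiniteMeasure μ := by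
    constructor
    rw [hμ, Measure.restrict_apply_univ, Real.volume_Ico]
    exact ENNReal.ofReal_lt_top
  have hgm : Measurable (fun p : ℝ × ℝ => |χ (p.1 + p.2) - χ p.1|) :=
    ((hχm.comp (measurable_fst.add measurable_snd)).sub (hχm.comp measurable_fst)).abs
  have hKsnd : AEStronglyMeasurable (fun p : ℝ × ℝ => Khat p.2) (μ.prod volume) :=
    hKint.1.comp_snd
  have hFm : AEStronglyMeasurable
      (Function.uncurry fun u ρ : ℝ => |χ (u + ρ) - χ u| * Khat ρ) (μ.prod volume) :=
    hgm.aestronglyMeasurable.mul hKsnd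
  have habs1 : ∀ x y : ℝ, |χ x - χ y| ≤ 1 := by
    intro x y
    by_cases h1 : x ∈ E <;> by_cases h2 : y ∈ E <;>
      simp [hχ, Set.indicator_apply, h1, h2]
  have hint_u : ∀ u : ℝ, Integrable (fun ρ => |χ (u + ρ) - χ u| * Khat ρ) := by
    intro u
    refine hKint.mono ?_ ?_
    · exact (((hχm.comp (measurable_id.const_add u)).sub measurable_const).abs
        ).aestronglyMeasurable.mul hKint.1
    · refine Filter.Eventually.of_forall fun ρ => ?_
      rw [Real.norm_eq_abs, Real.norm_eq_abs, abs_mul, abs_abs]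
      calc |χ (u + ρ) - χ u| * |Khat ρ| ≤ 1 * |Khat ρ| :=
            mul_le_mul_of_nonneg_right (habs1 _ _) (abs_nonneg _)
        _ = |Khat ρ| := one_mul _
  have hFint : Integrable (Function.uncurry fun u ρ : ℝ => |χ (u + ρ) - χ u| * Khat ρ)
      (μ.prod volume) := by
    rw [integrable_prod_iff hFm]
    constructor
    · exact Filter.Eventually.of_forall fun u => hint_u u
    · refine Integrable.mono' (integrable_const (∫ ρ, |Khat ρ|)) hFm.norm.integral_prod_right' ?_
      refine Filter.Eventually.of_forall fun u => ?_
      simp only [Function.uncurry_apply_pair]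
      rw [Real.norm_eq_abs, abs_of_nonneg (integral_nonneg fun ρ => norm_nonneg _)]
      refine integral_mono (hint_u u).norm hKint.abs fun ρ => ?_
      rw [Real.norm_eq_abs, abs_mul, abs_abs]
      calc |χ (u + ρ) - χ u| * |Khat ρ| ≤ 1 * |Khat ρ| :=
            mul_le_mul_of_nonneg_right (habs1 _ _) (abs_nonneg _)
        _ = |Khat ρ| := one_mul _
  have hswap : (∫ u in Set.Ico (0:ℝ) L, ∫ ρ : ℝ, |χ (u + ρ) - χ u| * Khat ρ)
      = ∫ ρ : ℝ, ∫ u in Set.Ico (0:ℝ) L, |χ (u + ρ) - χ u| * Khat ρ :=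
    integral_integral_swap hFint
  rw [hswap]
  have hslice : ∀ ρ : ℝ, (∫ u in Set.Ico (0:ℝ) L, |χ (u + ρ) - χ u| * Khat ρ)
      ≤ N * (|ρ| * Khat ρ) := by
    intro ρ
    set S : Set ℝ := {u : ℝ | ¬ ((u + ρ ∈ E) ↔ (u ∈ E))} with hSdef
    have hA : MeasurableSet ((fun u : ℝ => u + ρ) ⁻¹' E) := hE.preimage (measurable_add_const ρ)
    have hSmeas : MeasurableSet S := by
      have : S = (((fun u : ℝ => u + ρ) ⁻¹' E) \ E) ∪ (E \ ((fun u : ℝ => u + ρ) ⁻¹' E)) := by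
        ext u
        simp only [hSdef, Set.mem_setOf_eq, Set.mem_union, Set.mem_diff, Set.mem_preimage]
        tauto
      rw [this]
      exact (hA.diff hE).union (hE.diff hA)
    have habs2 : ∀ u : ℝ, |χ (u + ρ) - χ u| = S.indicator (fun _ => (1:ℝ)) u := by
      intro u
      by_cases h1 : u + ρ ∈ E <;> by_cases h2 : u ∈ E <;>
        simp [hχ, hSdef, Set.indicator_apply, h1, h2]
    rw [MeasureTheory.integral_mul_const]
    have h1 : (∫ u in Set.Ico (0:ℝ) L, |χ (u + ρ) - χ u|)
        = (volume (S ∩ Ico 0 L)).toReal := by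
      calc (∫ u in Set.Ico (0:ℝ) L, |χ (u + ρ) - χ u|)
          = ∫ u in Set.Ico (0:ℝ) L, S.indicator (fun _ => (1:ℝ)) u :=
            integral_congr_ae (Filter.Eventually.of_forall fun u => habs2 u)
        _ = ∫ _ in Set.Ico (0:ℝ) L ∩ S, (1:ℝ) := setIntegral_indicator hSmeas
        _ = (volume (Set.Ico (0:ℝ) L ∩ S)).toReal • (1:ℝ) := setIntegral_const 1
        _ = (volume (S ∩ Ico 0 L)).toReal := by rw [Set.inter_comm]; simp
    rw [h1]
    have h2 : (volume (S ∩ Ico 0 L)).toReal ≤ N * |ρ| := by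
      refine ENNReal.toReal_le_of_le_ofReal (by positivity) ?_
      have he : ENNReal.ofReal (N * |ρ|) = (hfin.toFinset.card : ℝ≥0∞) * ENNReal.ofReal |ρ| := by
        rw [ENNReal.ofReal_mul (by positivity), hN, hNcard, ENNReal.ofReal_natCast]
      rw [he]
      exact core_bound hL hper hfin ρ
    calc (volume (S ∩ Ico 0 L)).toReal * Khat ρ ≤ (N * |ρ|) * Khat ρ :=
          mul_le_mul_of_nonneg_right h2 (hK0 ρ)
      _ = N * (|ρ| * Khat ρ) := by ring
  calc (∫ ρ : ℝ, ∫ u in Set.Ico (0:ℝ) L, |χ (u + ρ) - χ u| * Khat ρ)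
      ≤ ∫ ρ : ℝ, N * (|ρ| * Khat ρ) :=
        integral_mono hFint.integral_prod_right (hKmom.const_mul N) hslice
    _ = N * ∫ ρ : ℝ, |ρ| * Khat ρ := integral_const_mul N _
end
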